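/- arXiv:1312.1400 — 2 statements merged into one kernel-verified Lean document; each statement's English description precedes it below -/
import Mathlib

section
/- Consider (QP1QC) with data A, B, f, g, μ. Assume the primal Slater condition holds and B ≠ 0. Then a vector x* ∈ ℝⁿ is a global minimizer of F over the feasible set {x : G(x) ≤ μ} if and only if there exists σ* ∈ ℝ such that: σ* ≥ 0; G(x*) ≤ μ; (A + σ*B)x* = f + σ*g; σ*·(G(x*) − μ) = 0; and A + σ*B is positive semidefinite. -/
lemma quad_neg_large (a b c : ℝ) (ha : a < 0) :
    ∀ s : ℝ, max 1 ((|b| + |c| + 1) / (-a)) ≤ s → a * s ^ 2 + b * s + c < 0 := by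
  intro s hs
  have h1 : (1:ℝ) ≤ s := le_trans (le_max_left _ _) hs
  have hs0 : 0 < s := lt_of_lt_of_le zero_lt_one h1
  have hX : (|b| + |c| + 1) / (-a) ≤ s := le_trans (le_max_right _ _) hs
  have hna : (0:ℝ) < -a := by linarith
  have h2 : |b| + |c| + 1 ≤ (-a) * s := (div_le_iff₀' hna).mp hX
  have hb : b * s ≤ |b| * s := by
    exact mul_le_mul_of_nonneg_right (le_abs_self b) hs0.le
  have hc : c ≤ |c| := le_abs_self c
  have hcs : |c| ≤ |c| * s := le_mul_of_one_le_right (abs_nonneg c) h1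
  have key : a * s ^ 2 + b * s + c ≤ s * (a * s + |b| + |c|) := by nlinarith
  have : a * s + |b| + |c| ≤ -1 := by nlinarith
  nlinarith

lemma quad_coeff_nonneg (a b c S : ℝ) (h : ∀ s, S ≤ s → 0 ≤ a * s ^ 2 + b * s + c) :
    0 ≤ a := by
  by_contra hlt
  push_neg at hlt
  set s := max S (max 1 ((|b| + |c| + 1) / (-a))) with hsdef
  have h1 := h s (le_max_left _ _)
  have h2 := quad_neg_large a b c hlt s (le_max_right _ _)
  linarith

lemma quad_all_nonneg (a b : ℝ) (h : ∀ s : ℝ, 0 ≤ a * s ^ 2 + b * s) :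
    b = 0 ∧ 0 ≤ a := by
  have ha : 0 ≤ a := by
    refine quad_coeff_nonneg a b 0 0 ?_
    intro s _; simpa using h s
  refine ⟨?_, ha⟩
  by_contra hb
  have hb0 : 0 < |b| := abs_pos.mpr hb
  set s := |b| / (2 * (a + 1)) with hsdef
  have ha1 : (0:ℝ) < a + 1 := by linarith
  have hs0 : 0 < s := by positivity
  have h1 := h s
  have h2 := h (-s)
  -- a s^2 + b s ≥ 0 and a s^2 - b s ≥ 0 give |b| s ≤ a s^2, so |b| ≤ a s
  have h3 : |b| * s ≤ a * s ^ 2 := by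
    rcases abs_cases b with ⟨he, _⟩ | ⟨he, _⟩ <;> nlinarith
  have h4 : |b| ≤ a * s := by nlinarith
  have h5 : a * s = a * |b| / (2 * (a + 1)) := by rw [hsdef]; ring
  have h6 : a * |b| / (2 * (a + 1)) < |b| := by
    rw [div_lt_iff₀ (by positivity)]
    nlinarith
  linarith

section Dines

variable {V : Type*} [AddCommGroup V] [Module ℝ V] {q1 q2 : V → ℝ}

def IsQuad {W : Type*} [AddCommGroup W] [Module ℝ W] (q : W → ℝ) : Prop :=
  ∀ (x y : W) (s t : ℝ),
    q (s • x + t • y) = s ^ 2 * q x + s * t * (q (x + y) - q x - q y) + t ^ 2 * q y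

lemma IsQuad.smul_apply (hq : IsQuad q1) (s : ℝ) (x : V) : q1 (s • x) = s ^ 2 * q1 x := by
  have := hq x 0 s 0; simpa using this

lemma IsQuad.zero_apply (hq : IsQuad q1) : q1 0 = 0 := by
  have := hq.smul_apply 0 0; simpa using this

def JRange (q1 q2 : V → ℝ) : Set (ℝ × ℝ) := {p | ∃ x : V, q1 x = p.1 ∧ q2 x = p.2}

lemma JRange.scale (h1 : IsQuad q1) (h2 : IsQuad q2) {p : ℝ × ℝ}
    (hp : p ∈ JRange q1 q2) {c : ℝ} (hc : 0 ≤ c) : (c * p.1, c * p.2) ∈ JRange q1 q2 := by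
  obtain ⟨x, hx1, hx2⟩ := hp
  refine ⟨Real.sqrt c • x, ?_, ?_⟩ <;>
    simp [h1.smul_apply, h2.smul_apply, Real.sq_sqrt hc, hx1, hx2]

lemma rot_exists (a1 b1 β1 a2 b2 β2 : ℝ) :
    ∃ θ : ℝ,
      (Real.cos θ ^ 2 * a1 + Real.cos θ * Real.sin θ * β1 + Real.sin θ ^ 2 * b1) * (a2 + b2)
        = (Real.cos θ ^ 2 * a2 + Real.cos θ * Real.sin θ * β2 + Real.sin θ ^ 2 * b2)
            * (a1 + b1) := by
  set d : ℝ → ℝ := fun θ =>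
    (Real.cos θ ^ 2 * a1 + Real.cos θ * Real.sin θ * β1 + Real.sin θ ^ 2 * b1) * (a2 + b2)
      - (Real.cos θ ^ 2 * a2 + Real.cos θ * Real.sin θ * β2 + Real.sin θ ^ 2 * b2) * (a1 + b1)
    with hd
  have hcont : ContinuousOn d (Set.Icc 0 (Real.pi / 2)) := by
    apply Continuous.continuousOn; rw [hd]; fun_prop
  have hd0 : d 0 = a1 * b2 - a2 * b1 := by simp [hd]; ring
  have hdpi : d (Real.pi / 2) = -(a1 * b2 - a2 * b1) := by simp [hd]; ring
  have hpi2 : (0:ℝ) ≤ Real.pi / 2 := by positivity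
  have hzero : ∃ θ, d θ = 0 := by
    rcases le_total 0 (a1 * b2 - a2 * b1) with hΔ | hΔ
    · obtain ⟨θ, -, hθ⟩ := intermediate_value_Icc' hpi2 hcont
        (show (0:ℝ) ∈ Set.Icc (d (Real.pi / 2)) (d 0) from
          Set.mem_Icc.mpr ⟨by rw [hdpi]; linarith, by rw [hd0]; linarith⟩)
      exact ⟨θ, hθ⟩
    · obtain ⟨θ, -, hθ⟩ := intermediate_value_Icc hpi2 hcont
        (show (0:ℝ) ∈ Set.Icc (d 0) (d (Real.pi / 2)) from
          Set.mem_Icc.mpr ⟨by rw [hd0]; linarith, by rw [hdpi]; linarith⟩)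
      exact ⟨θ, hθ⟩
  obtain ⟨θ, hθ⟩ := hzero
  rw [hd] at hθ
  simp only at hθ
  exact ⟨θ, by linarith⟩

lemma JRange.add_mem (h1 : IsQuad q1) (h2 : IsQuad q2) (x y : V) :
    (q1 x + q1 y, q2 x + q2 y) ∈ JRange q1 q2 := by
  by_cases hP : q1 x + q1 y = 0 ∧ q2 x + q2 y = 0
  · exact ⟨0, by simp [h1.zero_apply, h2.zero_apply, hP.1, hP.2]⟩
  obtain ⟨θ, hdet⟩ := rot_exists (q1 x) (q1 y) (q1 (x + y) - q1 x - q1 y)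
    (q2 x) (q2 y) (q2 (x + y) - q2 x - q2 y)
  have hcs : Real.sin θ ^ 2 + Real.cos θ ^ 2 = 1 := Real.sin_sq_add_cos_sq θ
  set c := Real.cos θ with hc
  set s := Real.sin θ with hs
  set u1 := c ^ 2 * q1 x + c * s * (q1 (x + y) - q1 x - q1 y) + s ^ 2 * q1 y with hu1
  set u2 := c ^ 2 * q2 x + c * s * (q2 (x + y) - q2 x - q2 y) + s ^ 2 * q2 y with hu2
  have hw : ((u1, u2) : ℝ × ℝ) ∈ JRange q1 q2 :=
    ⟨c • x + s • y, by rw [h1 x y c s], by rw [h2 x y c s]⟩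
  have hw' : ((q1 x + q1 y - u1, q2 x + q2 y - u2) : ℝ × ℝ) ∈ JRange q1 q2 := by
    refine ⟨(-s) • x + c • y, ?_, ?_⟩
    · rw [h1 x y (-s) c, hu1]; linear_combination (q1 x + q1 y) * hcs
    · rw [h2 x y (-s) c, hu2]; linear_combination (q2 x + q2 y) * hcs
  obtain ⟨t, ht1, ht2⟩ :
      ∃ t : ℝ, u1 = t * (q1 x + q1 y) ∧ u2 = t * (q2 x + q2 y) := by
    by_cases hP1 : q1 x + q1 y = 0
    · have hP2 : q2 x + q2 y ≠ 0 := fun h => hP ⟨hP1, h⟩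
      refine ⟨u2 / (q2 x + q2 y), ?_, by field_simp⟩
      have hz : u1 * (q2 x + q2 y) = 0 := by rw [hdet, hP1]; ring
      rcases mul_eq_zero.mp hz with h | h
      · rw [h, hP1]; ring
      · exact absurd h hP2
    · refine ⟨u1 / (q1 x + q1 y), by field_simp, ?_⟩
      field_simp
      linear_combination -hdet
  rcases lt_or_ge 0 t with ht | ht
  · have hmem := JRange.scale h1 h2 hw (c := 1 / t) (by positivity)
    have e1 : 1 / t * (u1, u2).1 = q1 x + q1 y := by
      simp only; rw [ht1]; field_simp
    have e2 : 1 / t * (u1, u2).2 = q2 x + q2 y := by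
      simp only; rw [ht2]; field_simp
    rwa [e1, e2] at hmem
  · have h1t : (0:ℝ) < 1 - t := by linarith
    have hmem := JRange.scale h1 h2 hw' (c := 1 / (1 - t)) (by positivity)
    have e1 : 1 / (1 - t) * (q1 x + q1 y - u1, q2 x + q2 y - u2).1 = q1 x + q1 y := by
      simp only; rw [ht1]; field_simp
    have e2 : 1 / (1 - t) * (q1 x + q1 y - u1, q2 x + q2 y - u2).2 = q2 x + q2 y := by
      simp only; rw [ht2]; field_simp
    rwa [e1, e2] at hmem

theorem dines_convex (h1 : IsQuad q1) (h2 : IsQuad q2) : Convex ℝ (JRange q1 q2) := by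
  intro p hp q hq a b ha hb hab
  have hap := JRange.scale h1 h2 hp ha
  have hbq := JRange.scale h1 h2 hq hb
  obtain ⟨x, hx1, hx2⟩ := hap
  obtain ⟨y, hy1, hy2⟩ := hbq
  have hm := JRange.add_mem h1 h2 x y
  rw [hx1, hx2, hy1, hy2] at hm
  convert hm using 1
  ext <;> simp

end Dines

section SLemma

variable {V : Type*} [AddCommGroup V] [Module ℝ V] {q1 q2 : V → ℝ}

theorem s_lemma_hom (h1 : IsQuad q1) (h2 : IsQuad q2)
    (slater : ∃ x : V, q2 x < 0)
    (H : ∀ x : V, ¬(q1 x < 0 ∧ q2 x < 0)) :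
    ∃ σ : ℝ, 0 ≤ σ ∧ ∀ x : V, 0 ≤ q1 x + σ * q2 x := by
  set K : Set (ℝ × ℝ) := {p | p.1 < 0 ∧ p.2 < 0} with hK
  have hKopen : IsOpen K :=
    (isOpen_lt continuous_fst continuous_const).inter
      (isOpen_lt continuous_snd continuous_const)
  have hcomb : ∀ (u v a b : ℝ), u < 0 → v < 0 → 0 ≤ a → 0 ≤ b → a + b = 1 →
      a * u + b * v < 0 := by
    intro u v a b hu hv ha hb hab
    rcases eq_or_lt_of_le ha with h | h
    · have hb1 : b = 1 := by linarith
      rw [← h, hb1]; simpa using hv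
    · have hx1 : a * u < 0 := mul_neg_of_pos_of_neg h hu
      have hx2 : 0 ≤ b * -v := mul_nonneg hb (by linarith)
      nlinarith
  have hKconv : Convex ℝ K := by
    intro p hp q hq a b ha hb hab
    exact ⟨hcomb p.1 q.1 a b hp.1 hq.1 ha hb hab, hcomb p.2 q.2 a b hp.2 hq.2 ha hb hab⟩
  have hDconv : Convex ℝ (JRange q1 q2) := dines_convex h1 h2
  have hdisj : Disjoint K (JRange q1 q2) := by
    rw [Set.disjoint_left]
    rintro p ⟨hp1, hp2⟩ ⟨x, hx1, hx2⟩
    exact H x ⟨hx1 ▸ hp1, hx2 ▸ hp2⟩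
  obtain ⟨φ, u, hφK, hφD⟩ := geometric_hahn_banach_open hKconv hKopen hDconv hdisj
  set a := φ (1, 0) with hadef
  set b := φ (0, 1) with hbdef
  have hφ : ∀ p : ℝ × ℝ, φ p = p.1 * a + p.2 * b := by
    intro p
    have hp : p = p.1 • ((1:ℝ), (0:ℝ)) + p.2 • ((0:ℝ), (1:ℝ)) := by
      simp [Prod.ext_iff]
    calc φ p = φ (p.1 • ((1:ℝ), (0:ℝ)) + p.2 • ((0:ℝ), (1:ℝ))) := by rw [← hp]
      _ = p.1 * a + p.2 * b := by
          rw [map_add, map_smul, map_smul]; simp [smul_eq_mul]; rfl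
  have hu0 : u ≤ 0 := by
    have h0 : ((0,0) : ℝ × ℝ) ∈ JRange q1 q2 := ⟨0, by simp [h1.zero_apply, h2.zero_apply]⟩
    have := hφD _ h0
    rwa [hφ, show ((0:ℝ) * a + (0:ℝ) * b) = 0 by ring] at this
  have hKval : ∀ s ε : ℝ, 0 < s → 0 < ε → -s * a + -ε * b < 0 := by
    intro s ε hs hε
    have hm : ((-s, -ε) : ℝ × ℝ) ∈ K := ⟨by simpa using hs, by simpa using hε⟩
    have := hφK _ hm
    rw [hφ] at this
    simp only at this
    linarith
  have ha : 0 ≤ a := by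
    by_contra hlt
    push_neg at hlt
    set ε := (-a) / (2 * (|b| + 1)) with hε
    have hε0 : 0 < ε := div_pos (by linarith) (by positivity)
    have := hKval 1 ε one_pos hε0
    have hbb : ε * b ≤ ε * |b| := mul_le_mul_of_nonneg_left (le_abs_self b) hε0.le
    have h2' : ε * |b| ≤ (-a) / 2 := by
      rw [hε]
      rw [div_mul_eq_mul_div, div_le_div_iff₀ (by positivity) (by norm_num)]
      nlinarith [abs_nonneg b]
    linarith
  have hb : 0 ≤ b := by
    by_contra hlt
    push_neg at hlt
    set ε := (-b) / (2 * (|a| + 1)) with hε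
    have hε0 : 0 < ε := div_pos (by linarith) (by positivity)
    have := hKval ε 1 hε0 one_pos
    have hbb : ε * a ≤ ε * |a| := mul_le_mul_of_nonneg_left (le_abs_self a) hε0.le
    have h2' : ε * |a| ≤ (-b) / 2 := by
      rw [hε]
      rw [div_mul_eq_mul_div, div_le_div_iff₀ (by positivity) (by norm_num)]
      nlinarith [abs_nonneg a]
    linarith
  have hDval : ∀ x : V, 0 ≤ a * q1 x + b * q2 x := by
    intro x
    by_contra hlt
    push_neg at hlt
    set val := a * q1 x + b * q2 x with hval
    have hvneg : val < 0 := hlt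
    set t := (u - 1) / val with ht
    have ht0 : 0 ≤ t := (div_pos_of_neg_of_neg (by linarith) hvneg).le
    have hmem : ((t * q1 x, t * q2 x) : ℝ × ℝ) ∈ JRange q1 q2 :=
      JRange.scale h1 h2 (show ((q1 x, q2 x) : ℝ × ℝ) ∈ JRange q1 q2 from ⟨x, rfl, rfl⟩) ht0
    have := hφD _ hmem
    rw [hφ] at this
    simp only at this
    have hcalc : t * q1 x * a + t * q2 x * b = u - 1 := by
      rw [ht]; field_simp [ne_of_lt hvneg]; rw [hval]; ring
    linarith
  have hane : a ≠ 0 ∨ b ≠ 0 := by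
    by_contra hc
    push_neg at hc
    have := hKval 1 1 one_pos one_pos
    rw [hc.1, hc.2] at this
    have h0 : (0:ℝ) < 0 := by linarith [hφK ((-1,-1) : ℝ×ℝ) ⟨by norm_num, by norm_num⟩]
    exact lt_irrefl 0 (by linarith)
  have hapos : 0 < a := by
    rcases lt_or_eq_of_le ha with h | h
    · exact h
    · exfalso
      obtain ⟨x₀, hx₀⟩ := slater
      have hbpos : 0 < b := by
        rcases hane with h' | h'
        · exact absurd h.symm h'
        · exact lt_of_le_of_ne hb (Ne.symm h')
      have := hDval x₀
      rw [← h] at this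
      nlinarith
  refine ⟨b / a, by positivity, fun x => ?_⟩
  have := hDval x
  have : 0 ≤ (a * q1 x + b * q2 x) / a := by positivity
  calc (0:ℝ) ≤ (a * q1 x + b * q2 x) / a := this
    _ = q1 x + b / a * q2 x := by field_simp
end SLemma

section Helpers
open Matrix

lemma dot_symm {n : ℕ} {M : Matrix (Fin n) (Fin n) ℝ} (hM : M.IsSymm) (v w : Fin n → ℝ) :
    v ⬝ᵥ M *ᵥ w = w ⬝ᵥ M *ᵥ v := by
  calc v ⬝ᵥ M *ᵥ w = v ᵥ* M ⬝ᵥ w := Matrix.dotProduct_mulVec v M w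
    _ = v ᵥ* Mᵀ ⬝ᵥ w := by rw [hM.eq]
    _ = (M *ᵥ v) ⬝ᵥ w := by rw [Matrix.vecMul_transpose]
    _ = w ⬝ᵥ M *ᵥ v := dotProduct_comm _ _

lemma shift_expand {n : ℕ} (M : Matrix (Fin n) (Fin n) ℝ) (h x₀ x : Fin n → ℝ) (s : ℝ) :
    (x₀ + s • x) ⬝ᵥ M *ᵥ (x₀ + s • x) - 2 * (h ⬝ᵥ (x₀ + s • x)) =
      (x ⬝ᵥ M *ᵥ x) * s ^ 2 + (x₀ ⬝ᵥ M *ᵥ x + x ⬝ᵥ M *ᵥ x₀ - 2 * (h ⬝ᵥ x)) * s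
        + (x₀ ⬝ᵥ M *ᵥ x₀ - 2 * (h ⬝ᵥ x₀)) := by
  simp only [Matrix.mulVec_add, Matrix.mulVec_smul, dotProduct_add, add_dotProduct,
    dotProduct_smul, smul_dotProduct, smul_eq_mul]
  ring

def homQ {n : ℕ} (M : Matrix (Fin n) (Fin n) ℝ) (h : Fin n → ℝ) (c : ℝ) :
    (Fin n → ℝ) × ℝ → ℝ :=
  fun v => v.1 ⬝ᵥ M *ᵥ v.1 - 2 * (h ⬝ᵥ v.1) * v.2 - c * v.2 ^ 2

lemma homQ_apply {n : ℕ} (M : Matrix (Fin n) (Fin n) ℝ) (h : Fin n → ℝ) (c : ℝ)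
    (x : Fin n → ℝ) (t : ℝ) :
    homQ M h c (x, t) = x ⬝ᵥ M *ᵥ x - 2 * (h ⬝ᵥ x) * t - c * t ^ 2 := rfl

lemma isQuad_homQ {n : ℕ} (M : Matrix (Fin n) (Fin n) ℝ) (h : Fin n → ℝ) (c : ℝ) :
    IsQuad (homQ M h c) := by
  intro x y s t
  simp only [homQ, Prod.fst_add, Prod.snd_add, Prod.smul_fst, Prod.smul_snd, smul_eq_mul,
    Matrix.mulVec_add, Matrix.mulVec_smul, dotProduct_add, add_dotProduct, dotProduct_smul,
    smul_dotProduct]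
  ring

end Helpers

open Matrix

/-- under the primal Slater condition with `B ≠ 0`, `x*` is a global
minimizer of (QP1QC) iff there is `σ* ≥ 0` with `x*` feasible, `(A + σ*B)x* = f + σ*g`,
complementarity `σ*(G(x*) − μ) = 0` and `A + σ*B ≽ 0`. -/
theorem stmt_15 {n : ℕ} (A B : Matrix (Fin n) (Fin n) ℝ)
    (hA : A.IsSymm) (hB : B.IsSymm) (f g : Fin n → ℝ) (μ : ℝ)
    (slater : ∃ x₀ : Fin n → ℝ, x₀ ⬝ᵥ B *ᵥ x₀ - 2 * (g ⬝ᵥ x₀) < μ)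
    (hBne : B ≠ 0) (xs : Fin n → ℝ) :
    (xs ⬝ᵥ B *ᵥ xs - 2 * (g ⬝ᵥ xs) ≤ μ ∧
      ∀ x : Fin n → ℝ, x ⬝ᵥ B *ᵥ x - 2 * (g ⬝ᵥ x) ≤ μ →
        xs ⬝ᵥ A *ᵥ xs - 2 * (f ⬝ᵥ xs) ≤ x ⬝ᵥ A *ᵥ x - 2 * (f ⬝ᵥ x)) ↔
      ∃ σs : ℝ, 0 ≤ σs ∧
        xs ⬝ᵥ B *ᵥ xs - 2 * (g ⬝ᵥ xs) ≤ μ ∧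
        (A + σs • B) *ᵥ xs = f + σs • g ∧
        σs * (xs ⬝ᵥ B *ᵥ xs - 2 * (g ⬝ᵥ xs) - μ) = 0 ∧
        (A + σs • B).PosSemidef := by
  constructor
  · rintro ⟨hfeas, hmin⟩
    obtain ⟨x₀, hx₀⟩ := slater
    have hQ1 : IsQuad (homQ A f (xs ⬝ᵥ A *ᵥ xs - 2 * (f ⬝ᵥ xs))) := isQuad_homQ _ _ _
    have hQ2 : IsQuad (homQ B g μ) := isQuad_homQ _ _ _
    have hslater : ∃ v : (Fin n → ℝ) × ℝ, homQ B g μ v < 0 := by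
      refine ⟨(x₀, 1), ?_⟩
      rw [homQ_apply]
      nlinarith [hx₀]
    have hH : ∀ v : (Fin n → ℝ) × ℝ,
        ¬(homQ A f (xs ⬝ᵥ A *ᵥ xs - 2 * (f ⬝ᵥ xs)) v < 0 ∧ homQ B g μ v < 0) := by
      rintro ⟨x, t⟩ ⟨hq1, hq2⟩
      rw [homQ_apply] at hq1 hq2
      by_cases ht : t = 0
      · subst ht
        have hA0 : x ⬝ᵥ A *ᵥ x < 0 := by nlinarith [hq1]
        have hB0 : x ⬝ᵥ B *ᵥ x < 0 := by nlinarith [hq2]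
        have hfeaslarge : ∀ s : ℝ,
            max 1 ((|x₀ ⬝ᵥ B *ᵥ x + x ⬝ᵥ B *ᵥ x₀ - 2 * (g ⬝ᵥ x)| +
              |x₀ ⬝ᵥ B *ᵥ x₀ - 2 * (g ⬝ᵥ x₀) - μ| + 1) / (-(x ⬝ᵥ B *ᵥ x))) ≤ s →
            (x₀ + s • x) ⬝ᵥ B *ᵥ (x₀ + s • x) - 2 * (g ⬝ᵥ (x₀ + s • x)) ≤ μ := by
          intro s hs
          have h := quad_neg_large (x ⬝ᵥ B *ᵥ x)
            (x₀ ⬝ᵥ B *ᵥ x + x ⬝ᵥ B *ᵥ x₀ - 2 * (g ⬝ᵥ x))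
            (x₀ ⬝ᵥ B *ᵥ x₀ - 2 * (g ⬝ᵥ x₀) - μ) hB0 s hs
          have e := shift_expand B g x₀ x s
          linarith
        have hmin_s : ∀ s : ℝ,
            max 1 ((|x₀ ⬝ᵥ B *ᵥ x + x ⬝ᵥ B *ᵥ x₀ - 2 * (g ⬝ᵥ x)| +
              |x₀ ⬝ᵥ B *ᵥ x₀ - 2 * (g ⬝ᵥ x₀) - μ| + 1) / (-(x ⬝ᵥ B *ᵥ x))) ≤ s →
            0 ≤ (x ⬝ᵥ A *ᵥ x) * s ^ 2
              + (x₀ ⬝ᵥ A *ᵥ x + x ⬝ᵥ A *ᵥ x₀ - 2 * (f ⬝ᵥ x)) * s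
              + (x₀ ⬝ᵥ A *ᵥ x₀ - 2 * (f ⬝ᵥ x₀) - (xs ⬝ᵥ A *ᵥ xs - 2 * (f ⬝ᵥ xs))) := by
          intro s hs
          have h := hmin _ (hfeaslarge s hs)
          have e := shift_expand A f x₀ x s
          linarith
        have := quad_coeff_nonneg _ _ _ _ hmin_s
        linarith
      · have ht2 : 0 < t ^ 2 := by positivity
        have hsm : t • ((t⁻¹ • x, (1:ℝ)) : (Fin n → ℝ) × ℝ) = (x, t) := by
          rw [Prod.smul_mk, smul_inv_smul₀ ht, smul_eq_mul, mul_one]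
        have h2s := hQ2.smul_apply t (t⁻¹ • x, 1)
        rw [hsm, homQ_apply, homQ_apply] at h2s
        have h1s := hQ1.smul_apply t (t⁻¹ • x, 1)
        rw [hsm, homQ_apply, homQ_apply] at h1s
        have hfw : (t⁻¹ • x) ⬝ᵥ B *ᵥ (t⁻¹ • x) - 2 * (g ⬝ᵥ (t⁻¹ • x)) ≤ μ := by
          nlinarith [hq2, h2s, ht2]
        have hge := hmin _ hfw
        nlinarith [hq1, h1s, ht2, hge]
    obtain ⟨σ, hσ0, hall⟩ := s_lemma_hom hQ1 hQ2 hslater hH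
    have hq : ∀ x : Fin n → ℝ,
        0 ≤ (x ⬝ᵥ A *ᵥ x - 2 * (f ⬝ᵥ x) - (xs ⬝ᵥ A *ᵥ xs - 2 * (f ⬝ᵥ xs)))
          + σ * (x ⬝ᵥ B *ᵥ x - 2 * (g ⬝ᵥ x) - μ) := by
      intro x
      have := hall (x, 1)
      rw [homQ_apply, homQ_apply] at this
      nlinarith [this]
    have hcomp : σ * (xs ⬝ᵥ B *ᵥ xs - 2 * (g ⬝ᵥ xs) - μ) = 0 := by
      have h1 := hq xs
      have h2 : 0 ≤ σ * (μ - (xs ⬝ᵥ B *ᵥ xs - 2 * (g ⬝ᵥ xs))) :=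
        mul_nonneg hσ0 (by linarith)
      nlinarith [h1, h2]
    have hMsymm : (A + σ • B).IsSymm := by
      show (A + σ • B)ᵀ = A + σ • B
      rw [Matrix.transpose_add, Matrix.transpose_smul, hA.eq, hB.eq]
    have eAB : ∀ v w : Fin n → ℝ,
        v ⬝ᵥ (A + σ • B) *ᵥ w = v ⬝ᵥ A *ᵥ w + σ * (v ⬝ᵥ B *ᵥ w) := by
      intro v w
      rw [Matrix.add_mulVec, Matrix.smul_mulVec, dotProduct_add, dotProduct_smul,
        smul_eq_mul]
    have efg : ∀ v : Fin n → ℝ, (f + σ • g) ⬝ᵥ v = f ⬝ᵥ v + σ * (g ⬝ᵥ v) := by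
      intro v
      rw [add_dotProduct, smul_dotProduct, smul_eq_mul]
    have key : ∀ d : Fin n → ℝ, ∀ s : ℝ,
        0 ≤ (d ⬝ᵥ (A + σ • B) *ᵥ d) * s ^ 2
          + (xs ⬝ᵥ (A + σ • B) *ᵥ d + d ⬝ᵥ (A + σ • B) *ᵥ xs - 2 * ((f + σ • g) ⬝ᵥ d)) * s := by
      intro d s
      have h1 := hq (xs + s • d)
      have eA := shift_expand A f xs d s
      have eB := shift_expand B g xs d s
      have e6 : (d ⬝ᵥ (A + σ • B) *ᵥ d) * s ^ 2
          + (xs ⬝ᵥ (A + σ • B) *ᵥ d + d ⬝ᵥ (A + σ • B) *ᵥ xs - 2 * ((f + σ • g) ⬝ᵥ d)) * s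
          = ((xs + s • d) ⬝ᵥ A *ᵥ (xs + s • d) - 2 * (f ⬝ᵥ (xs + s • d))
              - (xs ⬝ᵥ A *ᵥ xs - 2 * (f ⬝ᵥ xs)))
            + σ * ((xs + s • d) ⬝ᵥ B *ᵥ (xs + s • d) - 2 * (g ⬝ᵥ (xs + s • d)) - μ)
            - σ * (xs ⬝ᵥ B *ᵥ xs - 2 * (g ⬝ᵥ xs) - μ) := by
        rw [eAB d d, eAB xs d, eAB d xs, efg d, eA, eB]
        ring
      rw [e6, hcomp]
      linarith [h1]
    have hcoef := fun d => quad_all_nonneg _ _ (key d)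
    have hstat : (A + σ • B) *ᵥ xs = f + σ • g := by
      have hzero : ∀ d : Fin n → ℝ, d ⬝ᵥ ((A + σ • B) *ᵥ xs - (f + σ • g)) = 0 := by
        intro d
        have hb := (hcoef d).1
        have hsym := dot_symm hMsymm xs d
        have e : d ⬝ᵥ ((A + σ • B) *ᵥ xs - (f + σ • g))
            = d ⬝ᵥ ((A + σ • B) *ᵥ xs) - (f + σ • g) ⬝ᵥ d := by
          rw [dotProduct_sub, dotProduct_comm d (f + σ • g)]
        rw [e]
        linarith
      have hz := hzero ((A + σ • B) *ᵥ xs - (f + σ • g))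
      have hzz := dotProduct_self_eq_zero.mp hz
      exact sub_eq_zero.mp hzz
    have hpsd : (A + σ • B).PosSemidef := by
      rw [Matrix.posSemidef_iff_dotProduct_mulVec]
      constructor
      · have h1 : (A + σ • B)ᴴ = (A + σ • B)ᵀ :=
          Matrix.conjTranspose_eq_transpose_of_trivial _
        exact h1.trans hMsymm.eq
      · intro x
        have h2 := (hcoef x).2
        have hstar : star x = x := by
          funext i; simp
        rw [hstar]
        exact h2
    exact ⟨σ, hσ0, hfeas, hstat, hcomp, hpsd⟩
  · rintro ⟨σ, hσ0, hfeas, hstat, hcomp, hpsd⟩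
    refine ⟨hfeas, fun x hx => ?_⟩
    have hMsymm : (A + σ • B).IsSymm := by
      show (A + σ • B)ᵀ = A + σ • B
      rw [Matrix.transpose_add, Matrix.transpose_smul, hA.eq, hB.eq]
    have eAB : ∀ v w : Fin n → ℝ,
        v ⬝ᵥ (A + σ • B) *ᵥ w = v ⬝ᵥ A *ᵥ w + σ * (v ⬝ᵥ B *ᵥ w) := by
      intro v w
      rw [Matrix.add_mulVec, Matrix.smul_mulVec, dotProduct_add, dotProduct_smul,
        smul_eq_mul]
    have efg : ∀ v : Fin n → ℝ, (f + σ • g) ⬝ᵥ v = f ⬝ᵥ v + σ * (g ⬝ᵥ v) := by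
      intro v
      rw [add_dotProduct, smul_dotProduct, smul_eq_mul]
    set d := x - xs with hd
    have hxd : x = xs + d := by rw [hd]; abel
    have hpsd2 := hpsd.dotProduct_mulVec_nonneg d
    have hstar : star d = d := by funext i; simp
    rw [hstar] at hpsd2
    have hsym1 : xs ⬝ᵥ (A + σ • B) *ᵥ d = d ⬝ᵥ (A + σ • B) *ᵥ xs := dot_symm hMsymm xs d
    have hvd : d ⬝ᵥ (A + σ • B) *ᵥ xs = (f + σ • g) ⬝ᵥ d := by
      rw [hstat, dotProduct_comm]
    have e1 : x ⬝ᵥ (A + σ • B) *ᵥ x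
        = xs ⬝ᵥ (A + σ • B) *ᵥ xs + xs ⬝ᵥ (A + σ • B) *ᵥ d + d ⬝ᵥ (A + σ • B) *ᵥ xs
          + d ⬝ᵥ (A + σ • B) *ᵥ d := by
      rw [hxd]
      simp only [Matrix.mulVec_add, dotProduct_add, add_dotProduct]
      ring
    have e2 : (f + σ • g) ⬝ᵥ x = (f + σ • g) ⬝ᵥ xs + (f + σ • g) ⬝ᵥ d := by
      rw [hxd, dotProduct_add]
    have hFx : x ⬝ᵥ A *ᵥ x - 2 * (f ⬝ᵥ x) + σ * (x ⬝ᵥ B *ᵥ x - 2 * (g ⬝ᵥ x))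
        = x ⬝ᵥ (A + σ • B) *ᵥ x - 2 * ((f + σ • g) ⬝ᵥ x) := by
      rw [eAB, efg]; ring
    have hFxs : xs ⬝ᵥ A *ᵥ xs - 2 * (f ⬝ᵥ xs) + σ * (xs ⬝ᵥ B *ᵥ xs - 2 * (g ⬝ᵥ xs))
        = xs ⬝ᵥ (A + σ • B) *ᵥ xs - 2 * ((f + σ • g) ⬝ᵥ xs) := by
      rw [eAB, efg]; ring
    have hσx : 0 ≤ σ * (μ - (x ⬝ᵥ B *ᵥ x - 2 * (g ⬝ᵥ x))) :=
      mul_nonneg hσ0 (by linarith)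
    nlinarith [hFx, hFxs, e1, e2, hsym1, hvd, hpsd2, hcomp, hσx]
end

section
/- Consider (QP1QC) with data A, B, f, g, μ and assume the primal Slater condition holds. Then for every s ∈ ℝ, the following are equivalent: (i) F(x) ≥ s for every x with G(x) ≤ μ; (ii) there exists σ ≥ 0 such that the (n+1)×(n+1) symmetric block matrix [[A + σB, −f − σg], [−fᵀ − σgᵀ, −μσ − s]] is positive semidefinite. In particular, the optimal value of (QP1QC) equals the optimal value of its SDP dual sup{s : ∃σ ≥ 0 with the above block matrix positive semidefinite}. -/
open Matrix


lemma symmdot {n : ℕ} {M : Matrix (Fin n) (Fin n) ℝ} (hM : M.IsSymm) (x y : Fin n → ℝ) :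
    x ⬝ᵥ M *ᵥ y = y ⬝ᵥ M *ᵥ x := by
  rw [Matrix.dotProduct_mulVec, ← Matrix.mulVec_transpose, hM, dotProduct_comm]

lemma bexpand {n : ℕ} {M : Matrix (Fin n) (Fin n) ℝ} (hM : M.IsSymm) (a b : ℝ)
    (u w : Fin n → ℝ) :
    (a • u + b • w) ⬝ᵥ M *ᵥ (a • u + b • w)
      = a^2 * (u ⬝ᵥ M *ᵥ u) + 2*a*b*(u ⬝ᵥ M *ᵥ w) + b^2 * (w ⬝ᵥ M *ᵥ w) := by
  have h := symmdot hM w u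
  simp [Matrix.mulVec_add, Matrix.mulVec_smul, dotProduct_add, add_dotProduct,
    smul_dotProduct, dotProduct_smul, smul_eq_mul]
  rw [h]; ring



/-- Reduced Dines step. -/
lemma dines_aux {V : Type*} [AddCommGroup V] [Module ℝ V]
    (p r : V → ℝ) (bp br : V → V → ℝ)
    (hp : ∀ (a b : ℝ) (v w : V), p (a•v + b•w) = a^2 * p v + 2*a*b*(bp v w) + b^2 * p w)
    (hr : ∀ (a b : ℝ) (v w : V), r (a•v + b•w) = a^2 * r v + 2*a*b*(br v w) + b^2 * r w)
    (v₁ v₂ : V) (c : ℝ) (hp1 : p v₁ = c) (hp2 : p v₂ = c)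
    (m : ℝ) (hm1 : r v₁ ≤ m) (hm2 : m ≤ r v₂) :
    ∃ v : V, p v = c ∧ r v = m := by
  have p0 : p 0 = 0 := by have := hp 0 0 0 0; simpa using this
  have r0 : r 0 = 0 := by have := hr 0 0 0 0; simpa using this
  have psmul : ∀ (a : ℝ) (v : V), p (a • v) = a^2 * p v := by
    intro a v; have := hp a 0 v v; simpa using this
  have rsmul : ∀ (a : ℝ) (v : V), r (a • v) = a^2 * r v := by
    intro a v; have := hr a 0 v v; simpa using this
  by_cases hc : c = 0
  · subst hc
    rcases lt_trichotomy m 0 with hm | hm | hm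
    · have h1 : r v₁ < 0 := lt_of_le_of_lt hm1 hm
      have hq : (0:ℝ) ≤ m / r v₁ := by
        rw [div_nonneg_iff]; right; exact ⟨le_of_lt hm, le_of_lt h1⟩
      refine ⟨Real.sqrt (m / r v₁) • v₁, ?_, ?_⟩
      · rw [psmul, Real.sq_sqrt hq, hp1, mul_zero]
      · rw [rsmul, Real.sq_sqrt hq]
        exact div_mul_cancel₀ m (ne_of_lt h1)
    · exact ⟨0, p0, by rw [r0, hm]⟩
    · have h2 : 0 < r v₂ := lt_of_lt_of_le hm hm2
      have hq : (0:ℝ) ≤ m / r v₂ := by positivity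
      refine ⟨Real.sqrt (m / r v₂) • v₂, ?_, ?_⟩
      · rw [psmul, Real.sq_sqrt hq, hp2, mul_zero]
      · rw [rsmul, Real.sq_sqrt hq]
        exact div_mul_cancel₀ m (ne_of_gt h2)
  · -- c ≠ 0
    set e := bp v₁ v₂ with he
    set ε : ℝ := if 0 ≤ e * c then 1 else -1 with hε
    have hεsq : ε^2 = 1 := by
      by_cases h : 0 ≤ e * c
      · rw [hε, if_pos h]; ring
      · rw [hε, if_neg h]; ring
    have hεec : 0 ≤ ε * e * c := by
      by_cases h : 0 ≤ e * c
      · rw [hε, if_pos h]; linarith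
      · rw [hε, if_neg h]; push_neg at h; nlinarith
    set g : ℝ → ℝ := fun t => c + 2 * Real.sqrt (1-t) * (ε * Real.sqrt t) * e with hg
    have hc2 : 0 < c^2 := by positivity
    have hgtc : ∀ t ∈ Set.Icc (0:ℝ) 1, c^2 ≤ g t * c := by
      rintro t ⟨ht0, ht1⟩
      have hs : 0 ≤ 2 * Real.sqrt (1-t) * Real.sqrt t := by positivity
      have h1 : 0 ≤ (2 * Real.sqrt (1-t) * (ε * Real.sqrt t) * e) * c := by
        have heq : (2 * Real.sqrt (1-t) * (ε * Real.sqrt t) * e) * c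
            = (2 * Real.sqrt (1-t) * Real.sqrt t) * (ε * e * c) := by ring
        rw [heq]; exact mul_nonneg hs hεec
      have : g t * c = c^2 + (2 * Real.sqrt (1-t) * (ε * Real.sqrt t) * e) * c := by
        rw [hg]; ring
      rw [this]; linarith
    have hgne : ∀ t ∈ Set.Icc (0:ℝ) 1, g t ≠ 0 := by
      intro t ht h0
      have := hgtc t ht
      rw [h0, zero_mul] at this
      linarith
    have hfrac : ∀ t ∈ Set.Icc (0:ℝ) 1, 0 < c / g t ∧ c / g t ≤ 1 := by
      intro t ht
      have h1 := hgtc t ht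
      have h2 := hgne t ht
      have hpos : 0 < g t * c := lt_of_lt_of_le hc2 h1
      have heq : c / g t = c^2 / (g t * c) := by
        field_simp
      constructor
      · rw [heq]; exact div_pos hc2 hpos
      · rw [heq]; exact (div_le_one hpos).mpr h1
    -- the candidate function
    set ρ : ℝ → ℝ := fun t =>
      (1-t) * r v₁ + 2 * Real.sqrt (1-t) * (ε * Real.sqrt t) * (br v₁ v₂) + t * r v₂ with hρ
    set φ : ℝ → ℝ := fun t => (c / g t) * ρ t with hφ
    have hgcont : ContinuousOn g (Set.Icc 0 1) := by
      apply Continuous.continuousOn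
      fun_prop
    have hρcont : ContinuousOn ρ (Set.Icc 0 1) := by
      apply Continuous.continuousOn
      fun_prop
    have hφcont : ContinuousOn φ (Set.Icc 0 1) :=
      ((continuousOn_const.div hgcont hgne).mul hρcont)
    have hφ0 : φ 0 = r v₁ := by
      rw [hφ]
      simp only [hg, hρ]
      norm_num [Real.sqrt_zero, Real.sqrt_one]
      field_simp
    have hφ1 : φ 1 = r v₂ := by
      rw [hφ]
      simp only [hg, hρ]
      norm_num [Real.sqrt_zero, Real.sqrt_one]
      field_simp
    have hivt := intermediate_value_Icc (by norm_num : (0:ℝ) ≤ 1) hφcont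
    rw [hφ0, hφ1] at hivt
    obtain ⟨t, htI, htm⟩ := hivt ⟨hm1, hm2⟩
    obtain ⟨ht0, ht1⟩ := htI
    have hfr := hfrac t ⟨ht0, ht1⟩
    have hgn := hgne t ⟨ht0, ht1⟩
    refine ⟨Real.sqrt (c / g t) • (Real.sqrt (1-t) • v₁ + (ε * Real.sqrt t) • v₂), ?_, ?_⟩
    · rw [psmul, Real.sq_sqrt (le_of_lt hfr.1), hp _ _ v₁ v₂,
        Real.sq_sqrt (by linarith : (0:ℝ) ≤ 1 - t)]
      have hb2 : (ε * Real.sqrt t)^2 = t := by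
        rw [mul_pow, hεsq, Real.sq_sqrt ht0, one_mul]
      rw [hb2, hp1, hp2, ← he]
      have : (1 - t) * c + 2 * Real.sqrt (1 - t) * (ε * Real.sqrt t) * e + t * c = g t := by
        rw [hg]; ring
      rw [this]
      field_simp
    · rw [rsmul, Real.sq_sqrt (le_of_lt hfr.1), hr _ _ v₁ v₂,
        Real.sq_sqrt (by linarith : (0:ℝ) ≤ 1 - t)]
      have hb2 : (ε * Real.sqrt t)^2 = t := by
        rw [mul_pow, hεsq, Real.sq_sqrt ht0, one_mul]
      rw [hb2]
      rw [← htm, hφ, hρ]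


lemma dines {V : Type*} [AddCommGroup V] [Module ℝ V]
    (P Q : V → ℝ) (BP BQ : V → V → ℝ)
    (hP : ∀ (a b : ℝ) (v w : V), P (a•v + b•w) = a^2 * P v + 2*a*b*(BP v w) + b^2 * P w)
    (hQ : ∀ (a b : ℝ) (v w : V), Q (a•v + b•w) = a^2 * Q v + 2*a*b*(BQ v w) + b^2 * Q w)
     :
    Convex ℝ (Set.range (fun v : V => (P v, Q v))) := by
  rintro y₁ ⟨v₁, rfl⟩ y₂ ⟨v₂, rfl⟩ θ₁ θ₂ hθ₁ hθ₂ hsum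
  by_cases hy : (P v₁, Q v₁) = (P v₂, Q v₂)
  · refine ⟨v₂, ?_⟩
    show (P v₂, Q v₂) = θ₁ • (P v₁, Q v₁) + θ₂ • (P v₂, Q v₂)
    rw [hy, ← add_smul, hsum, one_smul]
  · set d1 : ℝ := P v₂ - P v₁ with hd1
    set d2 : ℝ := Q v₂ - Q v₁ with hd2
    have hd : d1 ≠ 0 ∨ d2 ≠ 0 := by
      by_contra h
      push_neg at h
      apply hy
      have e1 : P v₁ = P v₂ := by have := h.1; rw [hd1] at this; linarith [sub_eq_zero.mp this]
      have e2 : Q v₁ = Q v₂ := by have := h.2; rw [hd2] at this; linarith [sub_eq_zero.mp this]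
      rw [e1, e2]
    have hdd : 0 < d1^2 + d2^2 := by
      rcases hd with h | h <;> positivity
    set p : V → ℝ := fun v => d2 * P v - d1 * Q v with hpdef
    set r : V → ℝ := fun v => d1 * P v + d2 * Q v with hrdef
    have hp : ∀ (a b : ℝ) (v w : V), p (a•v + b•w)
        = a^2 * p v + 2*a*b*(d2 * BP v w - d1 * BQ v w) + b^2 * p w := by
      intro a b v w; simp only [hpdef, hP, hQ]; ring
    have hr : ∀ (a b : ℝ) (v w : V), r (a•v + b•w)
        = a^2 * r v + 2*a*b*(d1 * BP v w + d2 * BQ v w) + b^2 * r w := by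
      intro a b v w; simp only [hrdef, hP, hQ]; ring
    have hp2 : p v₂ = p v₁ := by simp only [hpdef, hd1, hd2]; ring
    have hra : r v₂ = r v₁ + (d1^2 + d2^2) := by simp only [hrdef, hd1, hd2]; ring
    set m : ℝ := θ₁ * r v₁ + θ₂ * r v₂ with hm
    have hm1 : r v₁ ≤ m := by
      have key : m - r v₁ = θ₂ * (d1^2 + d2^2) := by
        rw [hm, hra]; linear_combination (r v₁) * hsum
      nlinarith [mul_nonneg hθ₂ hdd.le]
    have hm2 : m ≤ r v₂ := by
      have key : r v₂ - m = θ₁ * (d1^2 + d2^2) := by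
        rw [hm, hra]; linear_combination (-(r v₁ + (d1^2 + d2^2))) * hsum
      nlinarith [mul_nonneg hθ₁ hdd.le]
    obtain ⟨v, hpv, hrv⟩ := dines_aux p r _ _ hp hr v₁ v₂ (p v₁) rfl hp2 m hm1 hm2
    refine ⟨v, ?_⟩
    have e1 : d2 * P v - d1 * Q v = d2 * (θ₁ * P v₁ + θ₂ * P v₂) - d1 * (θ₁ * Q v₁ + θ₂ * Q v₂) := by
      rw [show d2 * P v - d1 * Q v = p v from rfl, hpv]
      have hCC : d2 * P v₁ - d1 * Q v₁ = d2 * P v₂ - d1 * Q v₂ := hp2.symm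
      show d2 * P v₁ - d1 * Q v₁ = _
      linear_combination (-(d2 * P v₁ - d1 * Q v₁)) * hsum + θ₂ * hCC
    have e2 : d1 * P v + d2 * Q v = d1 * (θ₁ * P v₁ + θ₂ * P v₂) + d2 * (θ₁ * Q v₁ + θ₂ * Q v₂) := by
      rw [show d1 * P v + d2 * Q v = r v from rfl, hrv, hm]
      simp only [hrdef]; ring
    have h3 : (d1^2 + d2^2) * (P v - (θ₁ * P v₁ + θ₂ * P v₂)) = 0 := by
      linear_combination d1 * e2 + d2 * e1
    have h4 : (d1^2 + d2^2) * (Q v - (θ₁ * Q v₁ + θ₂ * Q v₂)) = 0 := by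
      linear_combination d2 * e2 - d1 * e1
    have hPv : P v = θ₁ * P v₁ + θ₂ * P v₂ := by
      rcases mul_eq_zero.mp h3 with h | h
      · exact absurd h (ne_of_gt hdd)
      · linarith [sub_eq_zero.mp h]
    have hQv : Q v = θ₁ * Q v₁ + θ₂ * Q v₂ := by
      rcases mul_eq_zero.mp h4 with h | h
      · exact absurd h (ne_of_gt hdd)
      · linarith [sub_eq_zero.mp h]
    show (P v, Q v) = θ₁ • (P v₁, Q v₁) + θ₂ • (P v₂, Q v₂)
    simp [Prod.ext_iff, hPv, hQv]


lemma blockform {n : ℕ} (M0 : Matrix (Fin n) (Fin n) ℝ) (c : Fin n → ℝ) (d : ℝ)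
    (x : Fin n → ℝ) (t : ℝ) :
    (Sum.elim x (fun _ : Fin 1 => t)) ⬝ᵥ
      (Matrix.fromBlocks M0 (Matrix.replicateCol (Fin 1) c) (Matrix.replicateRow (Fin 1) c)
        (Matrix.of fun _ _ => d)) *ᵥ (Sum.elim x (fun _ : Fin 1 => t))
      = x ⬝ᵥ M0 *ᵥ x + 2*t*(c ⬝ᵥ x) + t^2*d := by
  rw [Matrix.fromBlocks_mulVec, sumElim_dotProduct_sumElim]
  simp [Matrix.mulVec, dotProduct, Matrix.replicateCol, Matrix.replicateRow, Finset.sum_add_distrib,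
    Finset.mul_sum, mul_add, mul_comm, mul_left_comm]
  have h : ∑ i, t * (c i * x i * 2) = ∑ i, t * (c i * x i) + ∑ i, t * (c i * x i) := by
    rw [← Finset.sum_add_distrib]; apply Finset.sum_congr rfl; intros; ring
  rw [h]; ring

lemma psd_iff {n : ℕ} (M0 : Matrix (Fin n) (Fin n) ℝ) (hM0 : M0.IsSymm)
    (c : Fin n → ℝ) (d : ℝ) :
    (Matrix.fromBlocks M0 (Matrix.replicateCol (Fin 1) c) (Matrix.replicateRow (Fin 1) c)
        (Matrix.of fun _ _ => d)).PosSemidef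
      ↔ ∀ (x : Fin n → ℝ) (t : ℝ), 0 ≤ x ⬝ᵥ M0 *ᵥ x + 2*t*(c ⬝ᵥ x) + t^2*d := by
  rw [Matrix.posSemidef_iff_dotProduct_mulVec]
  constructor
  · rintro ⟨-, h⟩ x t
    have := h (Sum.elim x (fun _ : Fin 1 => t))
    rwa [star_trivial, blockform] at this
  · intro h
    constructor
    · rw [Matrix.IsHermitian, Matrix.conjTranspose_eq_transpose_of_trivial,
        Matrix.fromBlocks_transpose, Matrix.transpose_replicateCol, Matrix.transpose_replicateRow]
      have hD : (Matrix.of fun _ _ : Fin 1 => d)ᵀ = Matrix.of fun _ _ : Fin 1 => d := by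
        ext i j; rfl
      rw [hM0, hD]
    · intro z
      have hz : z = Sum.elim (fun i => z (Sum.inl i)) (fun _ : Fin 1 => z (Sum.inr 0)) := by
        funext i; cases i with
        | inl i => simp
        | inr i => simp [Subsingleton.elim i 0]
      rw [star_trivial, hz, blockform]
      exact h _ _


lemma small_eps (X Y d : ℝ) (h : ∀ ε : ℝ, 0 < ε → 0 ≤ X + 2*ε*Y + ε^2*d) : 0 ≤ X := by
  by_contra hX
  push_neg at hX
  set D := 2*|Y| + |d| with hD
  have hD0 : 0 ≤ D := by positivity
  set ε := min 1 ((-X)/(D+1)) with hε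
  have hε0 : 0 < ε := lt_min one_pos (div_pos (by linarith) (by linarith))
  have hε1 : ε ≤ 1 := min_le_left _ _
  have hε2 : ε * (D+1) ≤ -X := by
    rw [← le_div_iff₀ (by linarith)]
    exact min_le_right _ _
  have h2 := h ε hε0
  have b1 : 2*ε*Y ≤ 2*ε*|Y| := by nlinarith [le_abs_self Y]
  have e1 : ε^2*d ≤ ε^2*|d| := by nlinarith [mul_nonneg (sq_nonneg ε) (sub_nonneg.2 (le_abs_self d))]
  have e2 : ε^2*|d| ≤ ε*|d| := by nlinarith [mul_nonneg (by nlinarith : (0:ℝ) ≤ ε - ε^2) (abs_nonneg d)]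
  have hεD : ε*(D+1) = 2*ε*|Y| + ε*|d| + ε := by rw [hD]; ring
  linarith

lemma homog_of_affine {n : ℕ} (M0 : Matrix (Fin n) (Fin n) ℝ) (c : Fin n → ℝ) (d : ℝ)
    (h : ∀ x : Fin n → ℝ, 0 ≤ x ⬝ᵥ M0 *ᵥ x + 2*(c ⬝ᵥ x) + d) :
    ∀ (x : Fin n → ℝ) (t : ℝ), 0 ≤ x ⬝ᵥ M0 *ᵥ x + 2*t*(c ⬝ᵥ x) + t^2*d := by
  have aux : ∀ (x : Fin n → ℝ) (t : ℝ), t ≠ 0 →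
      0 ≤ x ⬝ᵥ M0 *ᵥ x + 2*t*(c ⬝ᵥ x) + t^2*d := by
    intro x t ht
    have h' := h (t⁻¹ • x)
    rw [smul_dotProduct, Matrix.mulVec_smul, dotProduct_smul, dotProduct_smul,
      smul_eq_mul, smul_eq_mul, smul_eq_mul] at h'
    have key : x ⬝ᵥ M0 *ᵥ x + 2*t*(c ⬝ᵥ x) + t^2*d
        = t^2 * (t⁻¹ * (t⁻¹ * (x ⬝ᵥ M0 *ᵥ x)) + 2*(t⁻¹ * (c ⬝ᵥ x)) + d) := by
      field_simp
    rw [key]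
    exact mul_nonneg (sq_nonneg t) h'
  intro x t
  by_cases ht : t = 0
  · subst ht
    have h0 : 0 ≤ x ⬝ᵥ M0 *ᵥ x := by
      apply small_eps _ (c ⬝ᵥ x) d
      intro ε hε
      exact aux x ε (ne_of_gt hε)
    simpa using h0
  · exact aux x t ht

set_option maxHeartbeats 1000000 in
lemma slemma {n : ℕ} (A B : Matrix (Fin n) (Fin n) ℝ)
    (hA : A.IsSymm) (hB : B.IsSymm) (f g : Fin n → ℝ) (μ : ℝ)
    (slater : ∃ x₀ : Fin n → ℝ, x₀ ⬝ᵥ B *ᵥ x₀ - 2 * (g ⬝ᵥ x₀) < μ) (s : ℝ)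
    (h : ∀ x : Fin n → ℝ, x ⬝ᵥ B *ᵥ x - 2 * (g ⬝ᵥ x) ≤ μ →
          s ≤ x ⬝ᵥ A *ᵥ x - 2 * (f ⬝ᵥ x)) :
    ∃ σ : ℝ, 0 ≤ σ ∧ ∀ x : Fin n → ℝ,
      0 ≤ (x ⬝ᵥ A *ᵥ x - 2 * (f ⬝ᵥ x) - s) + σ * (x ⬝ᵥ B *ᵥ x - 2 * (g ⬝ᵥ x) - μ) := by
  classical
  obtain ⟨x₀, hx₀⟩ := slater
  set P : (Fin n → ℝ) × ℝ → ℝ :=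
    fun v => v.1 ⬝ᵥ A *ᵥ v.1 - 2*v.2*(f ⬝ᵥ v.1) - s*v.2^2 with hPdef
  set Q : (Fin n → ℝ) × ℝ → ℝ :=
    fun v => v.1 ⬝ᵥ B *ᵥ v.1 - 2*v.2*(g ⬝ᵥ v.1) - μ*v.2^2 with hQdef
  set BP : (Fin n → ℝ) × ℝ → (Fin n → ℝ) × ℝ → ℝ :=
    fun v w => v.1 ⬝ᵥ A *ᵥ w.1 - v.2*(f ⬝ᵥ w.1) - w.2*(f ⬝ᵥ v.1) - s*v.2*w.2 with hBPdef
  set BQ : (Fin n → ℝ) × ℝ → (Fin n → ℝ) × ℝ → ℝ :=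
    fun v w => v.1 ⬝ᵥ B *ᵥ w.1 - v.2*(g ⬝ᵥ w.1) - w.2*(g ⬝ᵥ v.1) - μ*v.2*w.2 with hBQdef
  have hP : ∀ (a b : ℝ) (v w : (Fin n → ℝ) × ℝ),
      P (a•v + b•w) = a^2 * P v + 2*a*b*(BP v w) + b^2 * P w := by
    intro a b v w
    simp only [hPdef, hBPdef, Prod.fst_add, Prod.snd_add, Prod.smul_fst, Prod.smul_snd,
      smul_eq_mul]
    rw [bexpand hA, dotProduct_add, dotProduct_smul, dotProduct_smul, smul_eq_mul, smul_eq_mul]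
    ring
  have hQ : ∀ (a b : ℝ) (v w : (Fin n → ℝ) × ℝ),
      Q (a•v + b•w) = a^2 * Q v + 2*a*b*(BQ v w) + b^2 * Q w := by
    intro a b v w
    simp only [hQdef, hBQdef, Prod.fst_add, Prod.snd_add, Prod.smul_fst, Prod.smul_snd,
      smul_eq_mul]
    rw [bexpand hB, dotProduct_add, dotProduct_smul, dotProduct_smul, smul_eq_mul, smul_eq_mul]
    ring
  -- Step A : the image avoids the negative open quadrant
  have stepA : ∀ v : (Fin n → ℝ) × ℝ, ¬ (P v < 0 ∧ Q v < 0) := by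
    rintro ⟨x, t⟩ ⟨hPv, hQv⟩
    by_cases ht : t = 0
    · subst ht
      simp only [hPdef, hQdef, mul_zero, zero_mul, sub_zero, ne_eq] at hPv hQv
      norm_num at hPv hQv
      -- perturbation argument
      set a : ℝ := x ⬝ᵥ A *ᵥ x with ha
      set L : ℝ := 2*(x₀ ⬝ᵥ B *ᵥ x) - 2*(g ⬝ᵥ x) with hL
      set L' : ℝ := 2*(x₀ ⬝ᵥ A *ᵥ x) - 2*(f ⬝ᵥ x) with hL'
      set c0 : ℝ := x₀ ⬝ᵥ A *ᵥ x₀ - 2*(f ⬝ᵥ x₀) - s with hc0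
      set ε : ℝ := if L ≤ 0 then 1 else -1 with hε
      have hεL : ε * L ≤ 0 := by
        by_cases hL0 : L ≤ 0
        · rw [hε, if_pos hL0]; linarith
        · rw [hε, if_neg hL0]; push_neg at hL0; linarith
      have hεsq : ε^2 = 1 := by
        by_cases hL0 : L ≤ 0
        · rw [hε, if_pos hL0]; ring
        · rw [hε, if_neg hL0]; ring
      have hεL' : ε * L' ≤ |L'| := by
        by_cases hL0 : L ≤ 0
        · rw [hε, if_pos hL0]; simpa using le_abs_self L'
        · rw [hε, if_neg hL0]; rw [neg_one_mul]
          exact (le_abs_self (-L')).trans (le_of_eq (abs_neg L'))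
      have hF : ∀ R : ℝ, 0 ≤ R → 0 ≤ c0 + (ε*L')*R + R^2*a := by
        intro R hR
        have hgdot : g ⬝ᵥ ((1:ℝ) • x₀ + (ε*R) • x) = g ⬝ᵥ x₀ + (ε*R)*(g ⬝ᵥ x) := by
          simp [dotProduct_add, dotProduct_smul]
        have hfdot : f ⬝ᵥ ((1:ℝ) • x₀ + (ε*R) • x) = f ⬝ᵥ x₀ + (ε*R)*(f ⬝ᵥ x) := by
          simp [dotProduct_add, dotProduct_smul]
        have hrw : x₀ + (ε*R) • x = (1:ℝ) • x₀ + (ε*R) • x := by rw [one_smul]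
        have hfeas : (x₀ + (ε*R) • x) ⬝ᵥ B *ᵥ (x₀ + (ε*R) • x)
            - 2 * (g ⬝ᵥ (x₀ + (ε*R) • x)) ≤ μ := by
          rw [hrw, bexpand hB, hgdot]
          have h1 : (ε*R)^2 * (x ⬝ᵥ B *ᵥ x) ≤ 0 :=
            mul_nonpos_of_nonneg_of_nonpos (sq_nonneg _) hQv.le
          have h2 : (ε*L) * R ≤ 0 := mul_nonpos_of_nonpos_of_nonneg hεL hR
          rw [hL] at h2
          nlinarith [hx₀]
        have := h _ hfeas
        rw [hrw, bexpand hA, hfdot] at this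
        have hsq : (ε*R)^2 = R^2 := by rw [mul_pow, hεsq, one_mul]
        rw [hsq] at this
        rw [hc0, hL', ha]
        nlinarith [this]
      -- contradiction with a < 0
      set R : ℝ := max 1 ((|L'| + |c0| + 1)/(-a)) with hR
      have hR1 : (1:ℝ) ≤ R := le_max_left _ _
      have h0R : (0:ℝ) ≤ R := by linarith
      have hRa : |L'| + |c0| + 1 ≤ R * (-a) := by
        rw [← div_le_iff₀ (by linarith : (0:ℝ) < -a)]
        exact le_max_right _ _
      have hcontra := hF R h0R
      nlinarith [mul_le_mul_of_nonneg_right hεL' h0R,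
        mul_le_mul_of_nonneg_left hRa h0R,
        le_abs_self c0, abs_nonneg L', abs_nonneg c0,
        mul_nonneg (sub_nonneg.2 hR1) (abs_nonneg c0)]
    · -- t ≠ 0 : descale
      have hfeas : (t⁻¹ • x) ⬝ᵥ B *ᵥ (t⁻¹ • x) - 2 * (g ⬝ᵥ (t⁻¹ • x)) ≤ μ := by
        have hQ' : Q (x, t) = t^2 * ((t⁻¹ • x) ⬝ᵥ B *ᵥ (t⁻¹ • x) - 2*(g ⬝ᵥ (t⁻¹ • x)) - μ) := by
          simp only [hQdef, smul_dotProduct, Matrix.mulVec_smul, dotProduct_smul, smul_eq_mul]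
          field_simp
        have ht2 : (0:ℝ) < t^2 := by positivity
        have := hQv
        rw [hQ'] at this
        nlinarith [this]
      have := h _ hfeas
      have hP' : P (x, t) = t^2 * ((t⁻¹ • x) ⬝ᵥ A *ᵥ (t⁻¹ • x) - 2*(f ⬝ᵥ (t⁻¹ • x)) - s) := by
        simp only [hPdef, smul_dotProduct, Matrix.mulVec_smul, dotProduct_smul, smul_eq_mul]
        field_simp
      rw [hP'] at hPv
      nlinarith [hPv, sq_nonneg t]
  -- separation
  have hconv := dines P Q BP BQ hP hQ
  have hCconv : Convex ℝ ((Set.Iio (0:ℝ)) ×ˢ (Set.Iio (0:ℝ))) :=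
    (convex_Iio 0).prod (convex_Iio 0)
  have hCopen : IsOpen ((Set.Iio (0:ℝ)) ×ˢ (Set.Iio (0:ℝ))) :=
    (isOpen_Iio).prod (isOpen_Iio)
  have hdisj : Disjoint ((Set.Iio (0:ℝ)) ×ˢ (Set.Iio (0:ℝ)))
      (Set.range (fun v : (Fin n → ℝ) × ℝ => (P v, Q v))) := by
    rw [Set.disjoint_right]
    rintro y ⟨v, rfl⟩ hy
    exact stepA v ⟨hy.1, hy.2⟩
  obtain ⟨φ, u₀, hφC, hφM⟩ := geometric_hahn_banach_open hCconv hCopen hconv hdisj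
  set a : ℝ := φ (1, 0) with haφ
  set b : ℝ := φ (0, 1) with hbφ
  have hφeq : ∀ y : ℝ × ℝ, φ y = y.1 * a + y.2 * b := by
    intro y
    have : y = y.1 • ((1:ℝ), (0:ℝ)) + y.2 • ((0:ℝ), (1:ℝ)) := by
      ext <;> simp
    conv_lhs => rw [this]
    rw [map_add, ContinuousLinearMap.map_smul, ContinuousLinearMap.map_smul,
      smul_eq_mul, smul_eq_mul]
  have hu0' : u₀ ≤ 0 := by
    have h0 : ((0:ℝ), (0:ℝ)) ∈ Set.range (fun v : (Fin n → ℝ) × ℝ => (P v, Q v)) := by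
      refine ⟨(0, 0), ?_⟩
      simp [hPdef, hQdef]
    have := hφM _ h0
    rw [hφeq] at this
    simpa using this
  have hCpt : ∀ p q : ℝ, p < 0 → q < 0 → p * a + q * b < u₀ := by
    intro p q hp hq
    have := hφC (p, q) ⟨hp, hq⟩
    rwa [hφeq] at this
  have hu0 : u₀ = 0 := by
    refine le_antisymm hu0' ?_
    by_contra hlt
    push_neg at hlt
    rcases le_or_gt (a + b) 0 with hab | hab
    · have := hCpt (-1) (-1) (by norm_num) (by norm_num)
      nlinarith
    · have hε0 : 0 < -u₀ / (2*(a+b)) := div_pos (by linarith) (by linarith)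
      obtain ⟨ε0, hε0d, hε0⟩ : ∃ ε0 : ℝ, ε0 = -u₀ / (2*(a+b)) ∧ 0 < ε0 := ⟨_, rfl, hε0⟩
      have hh := hCpt (-ε0) (-ε0) (by linarith) (by linarith)
      have heq : (-ε0) * a + (-ε0) * b = u₀/2 := by
        rw [hε0d]
        field_simp
      rw [heq] at hh
      linarith
  have hM0 : ∀ v : (Fin n → ℝ) × ℝ, 0 ≤ a * P v + b * Q v := by
    intro v
    have h1 := hφM (P v, Q v) ⟨v, rfl⟩
    rw [hφeq, hu0] at h1
    simp only at h1
    linarith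
  have hA0 : 0 ≤ a := by
    by_contra hneg
    push_neg at hneg
    have hk : 0 < (|b| + 1)/(-a) := div_pos (by positivity) (by linarith)
    have hh := hCpt (-((|b|+1)/(-a))) (-1) (by linarith) (by norm_num)
    rw [hu0] at hh
    have hka : (-((|b|+1)/(-a))) * a = |b| + 1 := by
      have h0 : (-a) ≠ 0 := by linarith
      rw [div_neg, neg_neg, div_mul_cancel₀ _ (ne_of_lt hneg)]
    nlinarith [le_abs_self b]
  have hB0 : 0 ≤ b := by
    by_contra hneg
    push_neg at hneg
    have hk : 0 < (|a| + 1)/(-b) := div_pos (by positivity) (by linarith)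
    have hh := hCpt (-1) (-((|a|+1)/(-b))) (by norm_num) (by linarith)
    rw [hu0] at hh
    have hkb : (-((|a|+1)/(-b))) * b = |a| + 1 := by
      have h0 : (-b) ≠ 0 := by linarith
      rw [div_neg, neg_neg, div_mul_cancel₀ _ (ne_of_lt hneg)]
    nlinarith [le_abs_self a]
  have hQx₀ : Q (x₀, 1) < 0 := by
    simp only [hQdef]
    norm_num
    linarith
  have hapos : 0 < a := by
    rcases eq_or_lt_of_le hA0 with heq | h
    · exfalso
      have h1 := hM0 (x₀, 1)
      rw [← heq, zero_mul, zero_add] at h1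
      have hb0 : b = 0 := by
        rcases eq_or_lt_of_le hB0 with hb | hb
        · exact hb.symm
        · nlinarith
      have hh := hCpt (-1) (-1) (by norm_num) (by norm_num)
      rw [hu0, ← heq, hb0] at hh
      norm_num at hh
    · exact h
  refine ⟨b / a, div_nonneg hB0 hapos.le, ?_⟩
  intro x
  have h1 : 0 ≤ a * (x ⬝ᵥ A *ᵥ x - 2*(f ⬝ᵥ x) - s) + b * (x ⬝ᵥ B *ᵥ x - 2*(g ⬝ᵥ x) - μ) := by
    have h2 := hM0 (x, 1)
    simp only [hPdef, hQdef] at h2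
    norm_num at h2
    linarith
  have key : (x ⬝ᵥ A *ᵥ x - 2 * (f ⬝ᵥ x) - s) + (b/a) * (x ⬝ᵥ B *ᵥ x - 2 * (g ⬝ᵥ x) - μ)
      = (a * (x ⬝ᵥ A *ᵥ x - 2*(f ⬝ᵥ x) - s) + b * (x ⬝ᵥ B *ᵥ x - 2*(g ⬝ᵥ x) - μ)) / a := by
    field_simp
  rw [key]
  exact div_nonneg h1 hapos.le

lemma symmAB {n : ℕ} {A B : Matrix (Fin n) (Fin n) ℝ} (hA : A.IsSymm) (hB : B.IsSymm) (σ : ℝ) :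
    (A + σ • B).IsSymm := by
  rw [Matrix.IsSymm, Matrix.transpose_add, Matrix.transpose_smul, hA, hB]

lemma expand_id {n : ℕ} (A B : Matrix (Fin n) (Fin n) ℝ) (f g : Fin n → ℝ) (μ s σ : ℝ)
    (x : Fin n → ℝ) :
    x ⬝ᵥ (A + σ • B) *ᵥ x + 2*((-(f + σ • g)) ⬝ᵥ x) + (-μ*σ - s)
      = (x ⬝ᵥ A *ᵥ x - 2*(f ⬝ᵥ x) - s) + σ * (x ⬝ᵥ B *ᵥ x - 2*(g ⬝ᵥ x) - μ) := by
  simp [Matrix.add_mulVec, Matrix.smul_mulVec, dotProduct_add, neg_dotProduct,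
    add_dotProduct, smul_dotProduct, dotProduct_smul, smul_eq_mul]
  ring

/-- under the primal Slater condition, for every `s ∈ ℝ`, `F(x) ≥ s` for
all feasible `x` iff there is `σ ≥ 0` making the block matrix
`[[A + σB, −f − σg], [−fᵀ − σgᵀ, −μσ − s]]` positive semidefinite; in particular the
optimal value of (QP1QC) equals the optimal value of its SDP dual. -/
theorem stmt_17 {n : ℕ} (A B : Matrix (Fin n) (Fin n) ℝ)
    (hA : A.IsSymm) (hB : B.IsSymm) (f g : Fin n → ℝ) (μ : ℝ)
    (slater : ∃ x₀ : Fin n → ℝ, x₀ ⬝ᵥ B *ᵥ x₀ - 2 * (g ⬝ᵥ x₀) < μ) :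
    (∀ s : ℝ,
      (∀ x : Fin n → ℝ, x ⬝ᵥ B *ᵥ x - 2 * (g ⬝ᵥ x) ≤ μ →
          s ≤ x ⬝ᵥ A *ᵥ x - 2 * (f ⬝ᵥ x)) ↔
        ∃ σ : ℝ, 0 ≤ σ ∧
          (Matrix.fromBlocks (A + σ • B)
            (Matrix.replicateCol (Fin 1) (-(f + σ • g)))
            (Matrix.replicateRow (Fin 1) (-(f + σ • g)))
            (Matrix.of fun _ _ => -μ * σ - s)).PosSemidef) ∧
    sInf ((fun x : Fin n → ℝ => x ⬝ᵥ A *ᵥ x - 2 * (f ⬝ᵥ x)) ''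
        {x : Fin n → ℝ | x ⬝ᵥ B *ᵥ x - 2 * (g ⬝ᵥ x) ≤ μ}) =
      sSup {s : ℝ | ∃ σ : ℝ, 0 ≤ σ ∧
        (Matrix.fromBlocks (A + σ • B)
          (Matrix.replicateCol (Fin 1) (-(f + σ • g)))
          (Matrix.replicateRow (Fin 1) (-(f + σ • g)))
          (Matrix.of fun _ _ => -μ * σ - s)).PosSemidef} := by
  have main : ∀ s : ℝ,
      (∀ x : Fin n → ℝ, x ⬝ᵥ B *ᵥ x - 2 * (g ⬝ᵥ x) ≤ μ →
          s ≤ x ⬝ᵥ A *ᵥ x - 2 * (f ⬝ᵥ x)) ↔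
        ∃ σ : ℝ, 0 ≤ σ ∧
          (Matrix.fromBlocks (A + σ • B)
            (Matrix.replicateCol (Fin 1) (-(f + σ • g)))
            (Matrix.replicateRow (Fin 1) (-(f + σ • g)))
            (Matrix.of fun _ _ => -μ * σ - s)).PosSemidef := by
    intro s
    constructor
    · intro hs
      obtain ⟨σ, hσ, hineq⟩ := slemma A B hA hB f g μ slater s hs
      refine ⟨σ, hσ, ?_⟩
      rw [psd_iff _ (symmAB hA hB σ)]
      apply homog_of_affine
      intro x
      rw [expand_id]
      exact hineq x
    · rintro ⟨σ, hσ, hpsd⟩ x hx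
      rw [psd_iff _ (symmAB hA hB σ)] at hpsd
      have h1 := hpsd x 1
      have h2 : (0:ℝ) ≤ x ⬝ᵥ (A + σ • B) *ᵥ x + 2*((-(f + σ • g)) ⬝ᵥ x) + (-μ*σ - s) := by
        have : x ⬝ᵥ (A + σ • B) *ᵥ x + 2*((-(f + σ • g)) ⬝ᵥ x) + (-μ*σ - s)
            = x ⬝ᵥ (A + σ • B) *ᵥ x + 2*1*((-(f + σ • g)) ⬝ᵥ x) + 1^2*(-μ*σ - s) := by ring
        rw [this]
        exact h1
      rw [expand_id] at h2
      have h3 : σ * (x ⬝ᵥ B *ᵥ x - 2*(g ⬝ᵥ x) - μ) ≤ 0 :=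
        mul_nonpos_of_nonneg_of_nonpos hσ (by linarith)
      linarith
  refine ⟨main, ?_⟩
  obtain ⟨x₀, hx₀⟩ := slater
  set S := ((fun x : Fin n → ℝ => x ⬝ᵥ A *ᵥ x - 2 * (f ⬝ᵥ x)) ''
      {x : Fin n → ℝ | x ⬝ᵥ B *ᵥ x - 2 * (g ⬝ᵥ x) ≤ μ}) with hS
  have hne : S.Nonempty := ⟨_, ⟨x₀, le_of_lt hx₀, rfl⟩⟩
  have hDS : {s : ℝ | ∃ σ : ℝ, 0 ≤ σ ∧
      (Matrix.fromBlocks (A + σ • B)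
        (Matrix.replicateCol (Fin 1) (-(f + σ • g)))
        (Matrix.replicateRow (Fin 1) (-(f + σ • g)))
        (Matrix.of fun _ _ => -μ * σ - s)).PosSemidef} = lowerBounds S := by
    ext t
    rw [Set.mem_setOf_eq, ← main t]
    constructor
    · rintro ht y ⟨x, hxT, rfl⟩
      exact ht x hxT
    · intro ht x hxT
      exact ht ⟨x, hxT, rfl⟩
  rw [hDS]
  by_cases hbdd : BddBelow S
  · have hglb : IsGLB S (sInf S) := Real.isGLB_sInf hne hbdd
    have hIic : lowerBounds S = Set.Iic (sInf S) := by
      ext t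
      constructor
      · intro ht; exact hglb.2 ht
      · intro ht y hy; exact le_trans ht (hglb.1 hy)
    rw [hIic, csSup_Iic]
  · have h1 : lowerBounds S = ∅ := by
      rw [Set.eq_empty_iff_forall_notMem]
      intro t ht
      exact hbdd ⟨t, ht⟩
    rw [h1, Real.sSup_empty, Real.sInf_of_not_bddBelow hbdd]
end
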